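/- Let M be a locally compact metric space and let φ : M × ℝ → M be a flow. Then φ is dissipative if and only if φ possesses a global attractor, i.e. a compact invariant set K which is stable and whose region of attraction A(K) is all of M. -/

import Mathlib

open Set Metric Filter Topology Bornology

section Defs

variable {M : Type*} [TopologicalSpace M]

/-- A (continuous) flow on a topological space. -/
def IsFlow (φ : M → ℝ → M) : Prop :=
  Continuous (fun p : M × ℝ => φ p.1 p.2) ∧
    (∀ x, φ x 0 = x) ∧ ∀ x s t, φ (φ x s) t = φ x (s + t)

/-- A set `S` is invariant for the flow `φ` if `φ(S,t) = S` for every `t`. -/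
def FlowInvariant (φ : M → ℝ → M) (S : Set M) : Prop :=
  ∀ t : ℝ, (fun x => φ x t) '' S = S

/-- The omega-limit set `ω(x) = ⋂_{t>0} cl (φ(x,[t,∞)))`. -/
def omegaLimitSet (φ : M → ℝ → M) (x : M) : Set M :=
  ⋂ t ∈ Ioi (0 : ℝ), closure (φ x '' Ici t)

/-- The negative omega-limit set `ω*(x) = ⋂_{t<0} cl (φ(x,(-∞,t]))`. -/
def negOmegaLimitSet (φ : M → ℝ → M) (x : M) : Set M :=
  ⋂ t ∈ Iio (0 : ℝ), closure (φ x '' Iic t)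

/-- A flow is dissipative if every omega-limit set is nonempty and the closure of the
union of all omega-limit sets is compact. -/
def Dissipative (φ : M → ℝ → M) : Prop :=
  (∀ x, (omegaLimitSet φ x).Nonempty) ∧
    IsCompact (closure (⋃ x, omegaLimitSet φ x))

/-- `K` is stable: every neighborhood `U` of `K` contains a neighborhood `V` of `K`
with `φ(V,[0,∞)) ⊆ U`. -/
def FlowStable (φ : M → ℝ → M) (K : Set M) : Prop :=
  ∀ U ∈ nhdsSet K, ∃ V ∈ nhdsSet K, ∀ x ∈ V, ∀ t : ℝ, 0 ≤ t → φ x t ∈ U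

/-- `K` is negatively stable: every neighborhood `U` of `K` contains a neighborhood `V`
of `K` with `φ(V,(-∞,0]) ⊆ U`. -/
def FlowNegStable (φ : M → ℝ → M) (K : Set M) : Prop :=
  ∀ U ∈ nhdsSet K, ∃ V ∈ nhdsSet K, ∀ x ∈ V, ∀ t : ℝ, t ≤ 0 → φ x t ∈ U

/-- The region of attraction `A(K) = {x : ∅ ≠ ω(x) ⊆ K}`. -/
def attractionRegion (φ : M → ℝ → M) (K : Set M) : Set M :=
  {x | (omegaLimitSet φ x).Nonempty ∧ omegaLimitSet φ x ⊆ K}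

/-- The region of repulsion `R(K) = {x : ∅ ≠ ω*(x) ⊆ K}`. -/
def repulsionRegion (φ : M → ℝ → M) (K : Set M) : Set M :=
  {x | (negOmegaLimitSet φ x).Nonempty ∧ negOmegaLimitSet φ x ⊆ K}

/-- An attractor: a compact invariant stable set which is attracting, i.e. its region of
attraction is a neighborhood of it. -/
def IsAttractor (φ : M → ℝ → M) (K : Set M) : Prop :=
  IsCompact K ∧ FlowInvariant φ K ∧ FlowStable φ K ∧
    attractionRegion φ K ∈ nhdsSet K

/-- A repeller: a compact invariant negatively stable set which is repelling. -/
def IsRepeller (φ : M → ℝ → M) (K : Set M) : Prop :=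
  IsCompact K ∧ FlowInvariant φ K ∧ FlowNegStable φ K ∧
    repulsionRegion φ K ∈ nhdsSet K

/-- A global attractor: a compact invariant stable set whose region of attraction is the
whole space. -/
def IsGlobalAttractor (φ : M → ℝ → M) (K : Set M) : Prop :=
  IsCompact K ∧ FlowInvariant φ K ∧ FlowStable φ K ∧
    attractionRegion φ K = univ

/-- `N` is an isolating neighborhood of `K`: a compact neighborhood of `K` such that `K`
is the maximal invariant set contained in `N`. -/
def IsIsolatingNbhd (φ : M → ℝ → M) (N K : Set M) : Prop :=
  IsCompact N ∧ K ⊆ interior N ∧ FlowInvariant φ K ∧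
    ∀ S : Set M, FlowInvariant φ S → S ⊆ N → S ⊆ K

/-- An isolated invariant set: a compact invariant set having an isolating neighborhood. -/
def IsIsolatedInvariant (φ : M → ℝ → M) (K : Set M) : Prop :=
  IsCompact K ∧ FlowInvariant φ K ∧ ∃ N, IsIsolatingNbhd φ N K

/-- A parametrized family of flows `(φ_λ)_{λ ∈ [0,1]}`: jointly continuous on
`[0,1] × M × ℝ` and each `φ_λ` is a flow. -/
def IsParamFlow (φ : ℝ → M → ℝ → M) : Prop :=
  ContinuousOn (fun p : ℝ × M × ℝ => φ p.1 p.2.1 p.2.2)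
      ((Icc 0 1 : Set ℝ) ×ˢ (univ : Set (M × ℝ))) ∧
    ∀ l ∈ Icc (0 : ℝ) 1, IsFlow (φ l)

/-- `(K_λ)_{λ ∈ J}` is a continuation: each `K_λ` is an isolated invariant set of `φ_λ`
and every isolating neighborhood of `K_{λ₀}` remains an isolating neighborhood of `K_λ`
for `λ` near `λ₀` in `J`. -/
def IsContinuation (φ : ℝ → M → ℝ → M) (J : Set ℝ) (K : ℝ → Set M) : Prop :=
  (∀ l ∈ J, IsIsolatedInvariant (φ l) (K l)) ∧
    ∀ l₀ ∈ J, ∀ N : Set M, IsIsolatingNbhd (φ l₀) N (K l₀) →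
      ∃ δ > 0, ∀ l ∈ J, |l - l₀| < δ → IsIsolatingNbhd (φ l) N (K l)

/-- The family `(φ_λ)` is uniformly dissipative. -/
def UniformlyDissipative (φ : ℝ → M → ℝ → M) : Prop :=
  (∀ l ∈ Icc (0 : ℝ) 1, ∀ x, (omegaLimitSet (φ l) x).Nonempty) ∧
    IsCompact (closure (⋃ l ∈ Icc (0 : ℝ) 1, ⋃ x, omegaLimitSet (φ l) x))

end Defs

section NormedDefs

variable {E : Type*} [NormedAddCommGroup E]

/-- A coercive family of dissipative flows: for every continuation of the global
attractor of `φ₀`, the regions of attraction are bounded for all small `λ > 0`. -/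
def CoerciveFamily (φ : ℝ → E → ℝ → E) : Prop :=
  ∀ lam1 ∈ Ioc (0 : ℝ) 1, ∀ K : ℝ → Set E,
    IsContinuation φ (Icc 0 lam1) K → IsGlobalAttractor (φ 0) (K 0) →
      ∃ lam0, 0 < lam0 ∧ lam0 ≤ lam1 ∧ ∀ l, 0 < l → l < lam0 →
        IsBounded (attractionRegion (φ l) (K l))

/-- A polar family of dissipative flows: it has arbitrarily large bounded trajectories. -/
def PolarFamily (φ : ℝ → E → ℝ → E) : Prop :=
  ∀ L > 0, ∃ lam0 > 0, ∀ l, 0 < l → l < lam0 → l ≤ 1 →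
    ∃ x : E, IsBounded (range (φ l x)) ∧
      ∃ tl < (0 : ℝ), ∀ t < tl, L < ‖φ l x t‖

/-- The set of points whose trajectory tends to infinity in negative time
(the region of repulsion of the point at infinity). -/
def escapeRegion (φ : ℝ → E → ℝ → E) (l : ℝ) : Set E :=
  {x | Tendsto (fun t => ‖φ l x t‖) atBot atTop}

/-- The complementary isolated invariant set
`C_λ = ℝⁿ ∖ (A_λ(K_λ) ∪ R_λ(∞))`. -/
def complementarySet (φ : ℝ → E → ℝ → E) (K : ℝ → Set E) (l : ℝ) : Set E :=
  (attractionRegion (φ l) (K l) ∪ escapeRegion φ l)ᶜ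

end NormedDefs
section Helpers

variable {M : Type*} [MetricSpace M] {φ : M → ℝ → M}

/-- The closure of the union of all omega-limit sets. -/
def OmegaSet (φ : M → ℝ → M) : Set M := closure (⋃ x, omegaLimitSet φ x)

lemma flow_cont_right (hc : Continuous fun p : M × ℝ => φ p.1 p.2) (t : ℝ) :
    Continuous fun x => φ x t :=
  hc.comp (continuous_id.prodMk continuous_const)

lemma flow_cont_left (hc : Continuous fun p : M × ℝ => φ p.1 p.2) (x : M) :
    Continuous (φ x) :=
  hc.comp (continuous_const.prodMk continuous_id)

/-- The time-`t` map of a flow, as a homeomorphism. -/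
def flowHomeo (hc : Continuous fun p : M × ℝ => φ p.1 p.2)
    (h0 : ∀ x, φ x 0 = x) (hlaw : ∀ x s t, φ (φ x s) t = φ x (s + t)) (t : ℝ) : M ≃ₜ M where
  toFun x := φ x t
  invFun x := φ x (-t)
  left_inv x := by show φ (φ x t) (-t) = x; rw [hlaw, add_neg_cancel, h0]
  right_inv x := by show φ (φ x (-t)) t = x; rw [hlaw, neg_add_cancel, h0]
  continuous_toFun := flow_cont_right hc t
  continuous_invFun := flow_cont_right hc (-t)

/-- Every orbit returns (at arbitrarily late times) to any thickening of `OmegaSet φ`. -/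
lemma flow_returns {x : M} (hne : (omegaLimitSet φ x).Nonempty) {ε : ℝ} (hε : 0 < ε) (t₀ : ℝ) :
    ∃ s, t₀ ≤ s ∧ φ x s ∈ thickening ε (OmegaSet φ) := by
  obtain ⟨p, hp⟩ := hne
  have hpΩ : p ∈ OmegaSet φ := subset_closure (mem_iUnion.2 ⟨x, hp⟩)
  have h1 : p ∈ closure (φ x '' Ici (max t₀ 1)) := by
    simp only [omegaLimitSet] at hp
    exact mem_iInter₂.mp hp (max t₀ 1) (show (0:ℝ) < max t₀ 1 from lt_max_of_lt_right zero_lt_one)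
  obtain ⟨q, hq, hdq⟩ := Metric.mem_closure_iff.mp h1 ε hε
  obtain ⟨s, hs, rfl⟩ := hq
  exact ⟨s, (le_max_left _ _).trans hs,
    Metric.mem_thickening_iff.2 ⟨p, hpΩ, by rwa [dist_comm] at hdq⟩⟩

/-- If every sequence in `S` has a convergent subsequence, then `closure S` is compact. -/
lemma isCompact_closure_of_subseq {S : Set M}
    (h : ∀ u : ℕ → M, (∀ n, u n ∈ S) →
      ∃ a, ∃ g : ℕ → ℕ, StrictMono g ∧ Tendsto (u ∘ g) atTop (𝓝 a)) :
    IsCompact (closure S) := by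
  refine IsSeqCompact.isCompact ?_
  intro v hv
  have hw : ∀ n : ℕ, ∃ w ∈ S, dist (v n) w < 1 / (n + 1) := fun n =>
    Metric.mem_closure_iff.mp (hv n) _ (by positivity)
  choose w hwS hwd using hw
  obtain ⟨a, g, hg, hconv⟩ := h w hwS
  have haS : a ∈ closure S :=
    isClosed_closure.mem_of_tendsto hconv
      (Filter.Eventually.of_forall fun n => subset_closure (hwS _))
  refine ⟨a, haS, g, hg, ?_⟩
  rw [tendsto_iff_dist_tendsto_zero]
  have hb : ∀ n, dist ((v ∘ g) n) a ≤ 1 / (n + 1) + dist (w (g n)) a := by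
    intro n
    have h1 : dist (v (g n)) (w (g n)) < 1 / (g n + 1) := hwd _
    have h2 : (1 : ℝ) / (g n + 1) ≤ 1 / (n + 1) := by
      apply one_div_le_one_div_of_le (by positivity)
      have := hg.le_apply (x := n)
      have := (Nat.cast_le (α := ℝ)).2 this
      linarith
    calc dist ((v ∘ g) n) a ≤ dist (v (g n)) (w (g n)) + dist (w (g n)) a := dist_triangle _ _ _
      _ ≤ 1 / (n + 1) + dist (w (g n)) a := by linarith
  have hlim : Tendsto (fun n : ℕ => 1 / ((n : ℝ) + 1) + dist (w (g n)) a) atTop (𝓝 0) := by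
    have h1 : Tendsto (fun n : ℕ => 1 / ((n : ℝ) + 1)) atTop (𝓝 0) :=
      tendsto_one_div_add_atTop_nhds_zero_nat
    have h2 : Tendsto (fun n => dist (w (g n)) a) atTop (𝓝 0) :=
      tendsto_iff_dist_tendsto_zero.mp hconv
    simpa using h1.add h2
  exact squeeze_zero (fun n => dist_nonneg) hb hlim

/-- Key compactness lemma: the closure of the forward orbit of the compact
thickening `W` of `OmegaSet φ` is compact. -/
lemma forward_image_compact
    (hc : Continuous fun p : M × ℝ => φ p.1 p.2)
    (h0 : ∀ x, φ x 0 = x) (hlaw : ∀ x s t, φ (φ x s) t = φ x (s + t))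
    (hne : ∀ x : M, (omegaLimitSet φ x).Nonempty)
    {ε : ℝ} (hε : 0 < ε) (hWc : IsCompact (cthickening ε (OmegaSet φ))) :
    IsCompact (closure ((fun p : M × ℝ => φ p.1 p.2) ''
      (cthickening ε (OmegaSet φ) ×ˢ Ici (0 : ℝ)))) := by
  set W := cthickening ε (OmegaSet φ) with hWdef
  apply isCompact_closure_of_subseq
  intro u hu
  choose p hp hpe using hu
  set x : ℕ → M := fun n => (p n).1 with hxdef
  set t : ℕ → ℝ := fun n => (p n).2 with htdef
  have hxW : ∀ n, x n ∈ W := fun n => (hp n).1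
  have ht0 : ∀ n, 0 ≤ t n := fun n => (hp n).2
  -- last visit time to W before t n
  set T : ℕ → Set ℝ := fun n => Icc 0 (t n) ∩ φ (x n) ⁻¹' W with hTdef
  have hTc : ∀ n, IsClosed (T n) := fun n =>
    isClosed_Icc.inter (isClosed_cthickening.preimage (flow_cont_left hc (x n)))
  have hTne : ∀ n, (T n).Nonempty := fun n =>
    ⟨0, ⟨le_refl 0, ht0 n⟩, by simp only [mem_preimage, h0]; exact hxW n⟩
  have hTbdd : ∀ n, BddAbove (T n) := fun n => ⟨t n, fun s hs => hs.1.2⟩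
  set r : ℕ → ℝ := fun n => sSup (T n) with hrdef
  have hrT : ∀ n, r n ∈ T n := fun n => (hTc n).csSup_mem (hTne n) (hTbdd n)
  set z : ℕ → M := fun n => φ (x n) (r n) with hzdef
  have hzW : ∀ n, z n ∈ W := fun n => (hrT n).2
  set σ : ℕ → ℝ := fun n => t n - r n with hσdef
  have hσ0 : ∀ n, 0 ≤ σ n := fun n => sub_nonneg.2 (hrT n).1.2
  have hueq : ∀ n, u n = φ (z n) (σ n) := by
    intro n
    rw [hzdef]
    simp only
    rw [hlaw, ← hpe n]
    show φ (x n) (t n) = φ (x n) (r n + σ n)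
    congr 1
    simp only [hσdef]
    ring
  have houtz : ∀ n s, 0 < s → s ≤ σ n → φ (z n) s ∉ W := by
    intro n s hs1 hs2 hmem
    have h1 : (hrT n).1.1 = (hrT n).1.1 := rfl
    have hr0 : 0 ≤ r n := (hrT n).1.1
    have hrt : r n ≤ t n := (hrT n).1.2
    have hσle : s ≤ t n - r n := hs2
    have hrs : r n + s ∈ T n := by
      refine ⟨⟨by linarith, by linarith⟩, ?_⟩
      simp only [mem_preimage]
      have : φ (x n) (r n + s) = φ (z n) s := by rw [hzdef]; simp only; rw [hlaw]
      rwa [this]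
    have := le_csSup (hTbdd n) hrs
    have : r n + s ≤ r n := this
    linarith
  obtain ⟨z₀, hz₀W, g₁, hg₁, hzconv⟩ := hWc.tendsto_subseq hzW
  by_cases hb : ∃ C, ∃ᶠ i in atTop, σ (g₁ i) ≤ C
  · obtain ⟨C, hC⟩ := hb
    obtain ⟨g₂, hg₂, hg₂C⟩ := Filter.extraction_of_frequently_atTop hC
    have hσin : ∀ i, σ (g₁ (g₂ i)) ∈ Icc 0 C := fun i => ⟨hσ0 _, hg₂C i⟩
    obtain ⟨σ₀, _, g₃, hg₃, hσconv⟩ := isCompact_Icc.tendsto_subseq hσin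
    refine ⟨φ z₀ σ₀, g₁ ∘ (g₂ ∘ g₃), hg₁.comp (hg₂.comp hg₃), ?_⟩
    have hz' : Tendsto (fun i => z (g₁ (g₂ (g₃ i)))) atTop (𝓝 z₀) :=
      hzconv.comp ((hg₂.comp hg₃).tendsto_atTop)
    have hσ' : Tendsto (fun i => σ (g₁ (g₂ (g₃ i)))) atTop (𝓝 σ₀) := hσconv
    have hmain : Tendsto (fun i => φ (z (g₁ (g₂ (g₃ i)))) (σ (g₁ (g₂ (g₃ i))))) atTop
        (𝓝 (φ z₀ σ₀)) :=
      (hc.tendsto (z₀, σ₀)).comp (hz'.prodMk_nhds hσ')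
    exact hmain.congr fun i => (hueq _).symm
  · exfalso
    push_neg at hb
    have htend : Tendsto (fun i => σ (g₁ i)) atTop atTop := by
      rw [Filter.tendsto_atTop]
      intro C
      have h1 := hb C
      exact h1.mono fun i hi => hi.le
    have hout : ∀ s : ℝ, 0 < s → φ z₀ s ∉ thickening ε (OmegaSet φ) := by
      intro s hs hmem
      have hconv : Tendsto (fun i => φ (z (g₁ i)) s) atTop (𝓝 (φ z₀ s)) :=
        ((flow_cont_right hc s).tendsto z₀).comp hzconv
      have hev : ∀ᶠ i in atTop, φ (z (g₁ i)) s ∈ (thickening ε (OmegaSet φ))ᶜ := by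
        filter_upwards [htend.eventually_ge_atTop s] with i hi
        exact fun hmem' => houtz _ _ hs hi (thickening_subset_cthickening _ _ hmem')
      have := (isOpen_thickening.isClosed_compl).mem_of_tendsto hconv hev
      exact this hmem
    obtain ⟨s, hs1, hsmem⟩ := flow_returns (hne z₀) hε 1
    exact hout s (lt_of_lt_of_le zero_lt_one hs1) hsmem

end Helpers
/-- Pliss. A flow on a locally compact metric space is dissipative
if and only if it possesses a global attractor, i.e. a compact invariant stable set
whose region of attraction is the whole space. -/
theorem dissipative_iff_exists_globalAttractor
    {M : Type*} [MetricSpace M] [LocallyCompactSpace M]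
    (φ : M → ℝ → M) (hφ : IsFlow φ) :
    Dissipative φ ↔
      ∃ K : Set M, IsCompact K ∧ FlowInvariant φ K ∧ FlowStable φ K ∧
        attractionRegion φ K = univ := by
  obtain ⟨hc, h0, hlaw⟩ := hφ
  constructor
  · rintro ⟨hne, hΩc⟩
    have hΩc' : IsCompact (OmegaSet φ) := hΩc
    obtain ⟨N', hN'c, hN'int⟩ := exists_compact_superset hΩc'
    obtain ⟨ε, hε, hsub⟩ := hΩc'.exists_cthickening_subset_open isOpen_interior hN'int
    set W : Set M := cthickening ε (OmegaSet φ) with hWdef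
    have hWc : IsCompact W :=
      hN'c.of_isClosed_subset isClosed_cthickening (hsub.trans interior_subset)
    have hCc : IsCompact (closure ((fun p : M × ℝ => φ p.1 p.2) '' (W ×ˢ Ici (0 : ℝ)))) :=
      forward_image_compact hc h0 hlaw hne hε hWc
    set A : ℝ → Set M := fun rr => (fun p : M × ℝ => φ p.1 p.2) '' (W ×ˢ Ici rr) with hAdef
    have hAanti : ∀ {r₁ r₂ : ℝ}, r₁ ≤ r₂ → A r₂ ⊆ A r₁ := by
      intro r₁ r₂ h
      exact image_mono (prod_mono_right (Ici_subset_Ici.2 h))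
    set K : Set M := ⋂ n : ℕ, closure (A n) with hKdef
    have hKsub : ∀ n : ℕ, K ⊆ closure (A n) := fun n => iInter_subset _ n
    have hKc : IsCompact K := by
      refine hCc.of_isClosed_subset (isClosed_iInter fun n => isClosed_closure) ?_
      have := hKsub 0
      simpa [hAdef] using this
    -- invariance
    have himg : ∀ (tt rr : ℝ), (fun y => φ y tt) '' A rr = A (rr + tt) := by
      intro tt rr
      ext y
      constructor
      · rintro ⟨y', ⟨⟨xx, ss⟩, hmem, rfl⟩, rfl⟩
        exact ⟨(xx, ss + tt), ⟨hmem.1, (show rr + tt ≤ ss + tt from by have h : rr ≤ ss := hmem.2; linarith)⟩, (hlaw xx ss tt).symm⟩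
      · rintro ⟨⟨xx, ss⟩, hmem, rfl⟩
        refine ⟨φ xx (ss - tt), ⟨(xx, ss - tt), ⟨hmem.1, ?_⟩, rfl⟩, ?_⟩
        · exact le_sub_iff_add_le.mpr (show rr + tt ≤ ss from hmem.2)
        · show φ (φ xx (ss - tt)) tt = φ xx ss
          rw [hlaw, sub_add_cancel]
    have hshift : ∀ tt : ℝ, (⋂ n : ℕ, closure (A ((n : ℝ) + tt))) = K := by
      intro tt
      apply Subset.antisymm
      · intro y hy
        refine mem_iInter.2 fun n => ?_
        have hm := Nat.le_ceil ((n : ℝ) - tt)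
        set m := ⌈(n : ℝ) - tt⌉₊ with hmdef
        exact closure_mono (hAanti (by linarith)) (mem_iInter.1 hy m)
      · intro y hy
        refine mem_iInter.2 fun n => ?_
        have hm := Nat.le_ceil ((n : ℝ) + tt)
        set m := ⌈(n : ℝ) + tt⌉₊ with hmdef
        exact closure_mono (hAanti hm) (mem_iInter.1 hy m)
    have hKinv : FlowInvariant φ K := by
      intro tt
      have hcoe : ⇑(flowHomeo hc h0 hlaw tt) = fun y => φ y tt := rfl
      have h1 : (fun y => φ y tt) '' K = ⋂ n : ℕ, (fun y => φ y tt) '' closure (A n) := by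
        rw [hKdef]
        exact Set.image_iInter (flowHomeo hc h0 hlaw tt).bijective _
      rw [h1]
      have h2 : ∀ n : ℕ, (fun y => φ y tt) '' closure (A n) = closure (A ((n : ℝ) + tt)) := by
        intro n
        rw [← hcoe, Homeomorph.image_closure, hcoe, himg]
      rw [iInter_congr h2, hshift]
    -- every omega-limit set is contained in K
    have hωK : ∀ x₀ : M, omegaLimitSet φ x₀ ⊆ K := by
      intro x₀ q hq
      obtain ⟨s₀, hs₀, hs₀mem⟩ := flow_returns (hne x₀) hε 0
      refine mem_iInter.2 fun n => ?_
      have hth : (0 : ℝ) < s₀ + n + 1 := by positivity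
      have hq' : q ∈ closure (φ x₀ '' Ici (s₀ + n + 1)) := by
        simp only [omegaLimitSet] at hq
        exact mem_iInter₂.mp hq _ hth
      refine closure_mono ?_ hq'
      rintro y ⟨s, hs, rfl⟩
      refine ⟨(φ x₀ s₀, s - s₀), ⟨thickening_subset_cthickening _ _ hs₀mem, ?_⟩, ?_⟩
      · show (n : ℝ) ≤ s - s₀
        have : s₀ + n + 1 ≤ s := hs
        linarith
      · show φ (φ x₀ s₀) (s - s₀) = φ x₀ s
        rw [hlaw, add_sub_cancel]
    -- stability
    have hKst : FlowStable φ K := by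
      intro U hU
      obtain ⟨O, hOopen, hKO, hOU⟩ := mem_nhdsSet_iff_exists.mp hU
      obtain ⟨N₂, hN₂c, hKN₂⟩ := exists_compact_superset hKc
      set U₁ : Set M := O ∩ interior N₂ with hU₁def
      have hU₁open : IsOpen U₁ := hOopen.inter isOpen_interior
      have hKU₁ : K ⊆ U₁ := subset_inter hKO hKN₂
      have hclU₁ : IsCompact (closure U₁) :=
        hN₂c.of_isClosed_subset isClosed_closure
          ((closure_mono inter_subset_right).trans
            (closure_minimal interior_subset hN₂c.isClosed))
      suffices hsuff : ∃ V ∈ nhdsSet K, ∀ x ∈ V, ∀ t : ℝ, 0 ≤ t → φ x t ∈ U₁ by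
        obtain ⟨V, hV, hVprop⟩ := hsuff
        exact ⟨V, hV, fun x hx t ht => hOU (hVprop x hx t ht).1⟩
      by_contra hcon
      push_neg at hcon
      have hsel : ∀ n : ℕ, ∃ x, x ∈ thickening (1 / (n + 1)) K ∧
          ∃ t, 0 ≤ t ∧ φ x t ∉ U₁ := by
        intro n
        have hVmem : thickening (1 / (n + 1)) K ∈ nhdsSet K :=
          (isOpen_thickening.mem_nhdsSet).2 (self_subset_thickening (by positivity) K)
        obtain ⟨x, hx, t, ht, hout⟩ := hcon _ hVmem
        exact ⟨x, hx, t, ht, hout⟩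
      choose x hxthick t ht0 htout using hsel
      set S : ℕ → Set ℝ := fun n => {s | 0 ≤ s ∧ φ (x n) s ∉ U₁} with hSdef
      have hSne : ∀ n, (S n).Nonempty := fun n => ⟨t n, ht0 n, htout n⟩
      have hSclosed : ∀ n, IsClosed (S n) := by
        intro n
        have : S n = Ici 0 ∩ φ (x n) ⁻¹' U₁ᶜ := by
          ext s; simp [hSdef, mem_Ici, and_comm]
        rw [this]
        exact isClosed_Ici.inter (hU₁open.isClosed_compl.preimage (flow_cont_left hc (x n)))
      have hSbdd : ∀ n, BddBelow (S n) := fun n => ⟨0, fun s hs => hs.1⟩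
      set τ : ℕ → ℝ := fun n => sInf (S n) with hτdef
      have hτmem : ∀ n, τ n ∈ S n := fun n => (hSclosed n).csInf_mem (hSne n) (hSbdd n)
      have hτ0 : ∀ n, 0 ≤ τ n := fun n => (hτmem n).1
      have hyout : ∀ n, φ (x n) (τ n) ∉ U₁ := fun n => (hτmem n).2
      have hbefore : ∀ n s, 0 ≤ s → s < τ n → φ (x n) s ∈ U₁ := by
        intro n s hs0 hsτ
        by_contra hmem
        exact absurd (csInf_le (hSbdd n) ⟨hs0, hmem⟩) (not_le.2 hsτ)
      have hxk : ∀ n, ∃ k ∈ K, dist (x n) k < 1 / (n + 1) := fun n =>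
        Metric.mem_thickening_iff.mp (hxthick n)
      choose k hkK hkdist using hxk
      obtain ⟨k₀, hk₀K, g₁, hg₁, hkconv⟩ := hKc.tendsto_subseq hkK
      have hxconv : Tendsto (fun i => x (g₁ i)) atTop (𝓝 k₀) := by
        rw [tendsto_iff_dist_tendsto_zero]
        have hb : ∀ i, dist (x (g₁ i)) k₀ ≤ 1 / (i + 1) + dist (k (g₁ i)) k₀ := by
          intro i
          have h1 : dist (x (g₁ i)) (k (g₁ i)) < 1 / (g₁ i + 1) := hkdist _
          have h2 : (1 : ℝ) / (g₁ i + 1) ≤ 1 / (i + 1) := by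
            apply one_div_le_one_div_of_le (by positivity)
            have := hg₁.le_apply (x := i)
            have := (Nat.cast_le (α := ℝ)).2 this
            linarith
          calc dist (x (g₁ i)) k₀ ≤ dist (x (g₁ i)) (k (g₁ i)) + dist (k (g₁ i)) k₀ :=
                dist_triangle _ _ _
            _ ≤ 1 / (i + 1) + dist (k (g₁ i)) k₀ := by linarith
        have hlim : Tendsto (fun i : ℕ => 1 / ((i : ℝ) + 1) + dist (k (g₁ i)) k₀) atTop (𝓝 0) := by
          have h1 : Tendsto (fun i : ℕ => 1 / ((i : ℝ) + 1)) atTop (𝓝 0) :=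
            tendsto_one_div_add_atTop_nhds_zero_nat
          have h2 : Tendsto (fun i => dist (k (g₁ i)) k₀) atTop (𝓝 0) :=
            tendsto_iff_dist_tendsto_zero.mp hkconv
          simpa using h1.add h2
        exact squeeze_zero (fun i => dist_nonneg) hb hlim
      by_cases hbdd : ∃ C, ∃ᶠ i in atTop, τ (g₁ i) ≤ C
      · -- bounded exit times: the limit is in K but outside U₁
        obtain ⟨C, hC⟩ := hbdd
        obtain ⟨g₂, hg₂, hg₂C⟩ := Filter.extraction_of_frequently_atTop hC
        have hτin : ∀ i, τ (g₁ (g₂ i)) ∈ Icc 0 C := fun i => ⟨hτ0 _, hg₂C i⟩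
        obtain ⟨τ₀, _, g₃, hg₃, hτconv⟩ := isCompact_Icc.tendsto_subseq hτin
        have hx' : Tendsto (fun i => x (g₁ (g₂ (g₃ i)))) atTop (𝓝 k₀) :=
          hxconv.comp ((hg₂.comp hg₃).tendsto_atTop)
        have hτ' : Tendsto (fun i => τ (g₁ (g₂ (g₃ i)))) atTop (𝓝 τ₀) := hτconv
        have hyconv : Tendsto (fun i => φ (x (g₁ (g₂ (g₃ i)))) (τ (g₁ (g₂ (g₃ i))))) atTop
            (𝓝 (φ k₀ τ₀)) := (hc.tendsto (k₀, τ₀)).comp (hx'.prodMk_nhds hτ')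
        have hyK : φ k₀ τ₀ ∈ K := by
          rw [← hKinv τ₀]
          exact ⟨k₀, hk₀K, rfl⟩
        have hynotU₁ : φ k₀ τ₀ ∉ U₁ :=
          (hU₁open.isClosed_compl).mem_of_tendsto hyconv
            (Filter.Eventually.of_forall fun i => hyout _)
        exact hynotU₁ (hKU₁ hyK)
      · -- unbounded exit times
        push_neg at hbdd
        have hτtend : Tendsto (fun i => τ (g₁ i)) atTop atTop := by
          rw [Filter.tendsto_atTop]
          intro C
          have h1 := hbdd C
          exact h1.mono fun i hi => hi.le
        obtain ⟨i₀, hi₀⟩ := Filter.eventually_atTop.1 (hτtend.eventually_gt_atTop 0)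
        set Y : ℕ → M := fun i => φ (x (g₁ (i + i₀))) (τ (g₁ (i + i₀))) with hYdef
        have hyclos : ∀ i, Y i ∈ closure U₁ := by
          intro i
          have hτpos : 0 < τ (g₁ (i + i₀)) := hi₀ _ (Nat.le_add_left i₀ i)
          have htd : Tendsto (φ (x (g₁ (i + i₀)))) (𝓝[<] (τ (g₁ (i + i₀))))
              (𝓝 (Y i)) :=
            ((flow_cont_left hc _).tendsto _).mono_left nhdsWithin_le_nhds
          refine mem_closure_of_tendsto htd ?_
          filter_upwards [Ioo_mem_nhdsLT hτpos] with s hs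
          exact hbefore _ s hs.1.le hs.2
        obtain ⟨y₀, hy₀cl, g₂, hg₂, hYconv⟩ := hclU₁.tendsto_subseq hyclos
        have hynotU₁ : y₀ ∉ U₁ :=
          (hU₁open.isClosed_compl).mem_of_tendsto hYconv
            (Filter.Eventually.of_forall fun i => hyout _)
        have hτG : Tendsto (fun i => τ (g₁ (g₂ i + i₀))) atTop atTop :=
          hτtend.comp ((hg₂.add_const i₀).tendsto_atTop)
        have hback : ∀ s : ℝ, 0 ≤ s → φ y₀ (-s) ∈ closure U₁ := by
          intro s hs
          rcases eq_or_lt_of_le hs with hs' | hs'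
          · rw [← hs']
            simpa [h0] using hy₀cl
          · have hconv : Tendsto (fun i => φ (Y (g₂ i)) (-s)) atTop (𝓝 (φ y₀ (-s))) :=
              ((flow_cont_right hc (-s)).tendsto y₀).comp hYconv
            refine isClosed_closure.mem_of_tendsto hconv ?_
            filter_upwards [hτG.eventually_ge_atTop s] with i hi
            have heq : φ (Y (g₂ i)) (-s) =
                φ (x (g₁ (g₂ i + i₀))) (τ (g₁ (g₂ i + i₀)) + -s) := by
              rw [hYdef]; simp only; rw [hlaw]
            rw [heq]
            exact subset_closure (hbefore _ _ (by linarith) (by linarith))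
        set a : ℕ → M := fun j => φ y₀ (-(j : ℝ)) with hadef
        have hain : ∀ j, a j ∈ closure U₁ := fun j => hback j (Nat.cast_nonneg j)
        obtain ⟨a₀, _, m, hm, haconv⟩ := hclU₁.tendsto_subseq hain
        obtain ⟨u, hu0, huthick⟩ := flow_returns (hne a₀) hε 0
        have hy₀K : y₀ ∈ K := by
          refine mem_iInter.2 fun n => ?_
          have hconv2 : Tendsto (fun j => φ (a (m j)) u) atTop (𝓝 (φ a₀ u)) :=
            ((flow_cont_right hc u).tendsto a₀).comp haconv
          have hev1 : ∀ᶠ j in atTop, φ (a (m j)) u ∈ thickening ε (OmegaSet φ) :=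
            hconv2.eventually_mem (isOpen_thickening.mem_nhds huthick)
          have hmtend : Tendsto (fun j => ((m j : ℕ) : ℝ)) atTop atTop :=
            tendsto_natCast_atTop_atTop.comp hm.tendsto_atTop
          have hev2 : ∀ᶠ j in atTop, (n : ℝ) + u ≤ (m j : ℝ) :=
            hmtend.eventually_ge_atTop _
          obtain ⟨j, hj1, hj2⟩ := (hev1.and hev2).exists
          refine subset_closure ?_
          refine ⟨(φ (a (m j)) u, (m j : ℝ) - u), ⟨thickening_subset_cthickening _ _ hj1, ?_⟩, ?_⟩
          · show (n : ℝ) ≤ (m j : ℝ) - u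
            linarith
          · show φ (φ (a (m j)) u) ((m j : ℝ) - u) = y₀
            rw [hadef]
            simp only
            rw [hlaw, hlaw, show -((m j : ℕ) : ℝ) + (u + ((m j : ℝ) - u)) = 0 by ring, h0]
        exact hynotU₁ (hKU₁ hy₀K)
    refine ⟨K, hKc, hKinv, hKst, ?_⟩
    exact eq_univ_of_forall fun x₀ => ⟨hne x₀, hωK x₀⟩
  · rintro ⟨K, hKc, _, _, hAttr⟩
    have hx : ∀ x : M, (omegaLimitSet φ x).Nonempty ∧ omegaLimitSet φ x ⊆ K := by
      intro x
      have hxmem : x ∈ attractionRegion φ K := hAttr ▸ mem_univ x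
      exact hxmem
    refine ⟨fun x => (hx x).1, ?_⟩
    have hsub : closure (⋃ x, omegaLimitSet φ x) ⊆ K :=
      closure_minimal (iUnion_subset fun x => (hx x).2) hKc.isClosed
    exact hKc.of_isClosed_subset isClosed_closure hsub
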